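/- Let α ∈ (0, 1) and let (φ_m)_{m ≥ 1} be any sequence of nonnegative real numbers. Then for every t ≥ 1, Σ_{1 ≤ i < j ≤ t} (1/i)(1/j) · Π_{k=i+1}^{t}(1 − α/k) · Π_{l=j+1}^{t}(1 − α/l) · φ_{j−i} ≤ (6/(1−α)) · (1/(t+1))^α · Σ_{i=1}^{t} φ_i. -/

import Mathlib

open Finset

lemma tele_prod (j t : ℕ) (h : j ≤ t) :
    ∏ k ∈ Finset.Ioc j t, ((k : ℝ) / (k + 1)) = ((j : ℝ) + 1) / ((t : ℝ) + 1) := by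
  induction t with
  | zero => interval_cases j; simp
  | succ t ih =>
    rcases Nat.eq_or_lt_of_le h with rfl | h'
    · rw [Finset.Ioc_self, Finset.prod_empty, div_self (by positivity)]
    · have hjt : j ≤ t := Nat.lt_succ_iff.mp h'
      rw [Finset.prod_Ioc_succ_top hjt, ih hjt]
      push_cast
      field_simp

lemma factor_le {α : ℝ} (hα0 : 0 ≤ α) (hα1 : α ≤ 1) (k : ℕ) (hk : 1 ≤ k) :
    1 - α / (k : ℝ) ≤ ((k : ℝ) / ((k : ℝ) + 1)) ^ α := by
  have hx : (1 : ℝ) ≤ (k : ℝ) := by exact_mod_cast hk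
  have hx0 : (0 : ℝ) < k := by linarith
  have hx1 : (0 : ℝ) < (k : ℝ) + 1 := by linarith
  have hnn : (0:ℝ) ≤ 1 / (k:ℝ) := by positivity
  have hber : ((1 : ℝ) + 1 / (k : ℝ)) ^ α ≤ 1 + α * (1 / (k : ℝ)) :=
    rpow_one_add_le_one_add_mul_self (by linarith) hα0 hα1
  have heq : (1 : ℝ) + 1 / (k : ℝ) = ((k : ℝ) + 1) / (k : ℝ):= by field_simp
  rw [heq] at hber
  have hm : 0 ≤ 1 - α / (k:ℝ) := by
    have : α / (k:ℝ) ≤ 1 := by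
      rw [div_le_one hx0]; linarith
    linarith
  have hpos : 0 < (((k : ℝ) + 1) / (k : ℝ)) ^ α := Real.rpow_pos_of_pos (by positivity) _
  have key : (1 - α / (k:ℝ)) * ((((k : ℝ) + 1) / (k : ℝ)) ^ α) ≤ 1 := by
    calc (1 - α / (k:ℝ)) * ((((k : ℝ) + 1) / (k : ℝ)) ^ α)
        ≤ (1 - α / (k:ℝ)) * (1 + α * (1 / (k:ℝ))) := mul_le_mul_of_nonneg_left hber hm
      _ = 1 - (α / (k:ℝ))^2 := by ring
      _ ≤ 1 := by nlinarith [sq_nonneg (α / (k:ℝ))]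
  have hinv : ((k : ℝ) / ((k : ℝ) + 1)) = (((k : ℝ) + 1) / (k : ℝ))⁻¹ := (inv_div _ _).symm
  rw [hinv, Real.inv_rpow (by positivity), ← one_div, le_div_iff₀ hpos]
  exact key

lemma prod_nonneg' {α : ℝ} (hα1 : α ≤ 1) (j t : ℕ) :
    ∀ k ∈ Finset.Ioc j t, (0:ℝ) ≤ 1 - α / (k : ℝ) := by
  intro k hk
  have hk1 : 1 ≤ k := le_trans (Nat.succ_le_succ (Nat.zero_le j)) (Finset.mem_Ioc.mp hk).1
  have hx : (1:ℝ) ≤ (k:ℝ) := by exact_mod_cast hk1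
  have : α / (k:ℝ) ≤ 1 := by
    rw [div_le_one (by linarith)]; linarith
  linarith

lemma prod_le_one' {α : ℝ} (hα0 : 0 ≤ α) (hα1 : α ≤ 1) (j t : ℕ) :
    ∏ k ∈ Finset.Ioc j t, (1 - α / (k : ℝ)) ≤ 1 := by
  apply Finset.prod_le_one (prod_nonneg' hα1 j t)
  intro k hk
  have hk1 : 1 ≤ k := le_trans (Nat.succ_le_succ (Nat.zero_le j)) (Finset.mem_Ioc.mp hk).1
  have hx : (0:ℝ) < (k:ℝ) := by exact_mod_cast hk1
  have : 0 ≤ α / (k:ℝ) := by positivity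
  linarith

lemma prod_le_pow {α : ℝ} (hα0 : 0 ≤ α) (hα1 : α ≤ 1) (j t : ℕ) (hjt : j ≤ t) :
    ∏ k ∈ Finset.Ioc j t, (1 - α / (k : ℝ)) ≤ (((j:ℝ) + 1) / ((t:ℝ) + 1)) ^ α := by
  calc ∏ k ∈ Finset.Ioc j t, (1 - α / (k : ℝ))
      ≤ ∏ k ∈ Finset.Ioc j t, ((k : ℝ) / ((k : ℝ) + 1)) ^ α := by
        apply Finset.prod_le_prod (prod_nonneg' hα1 j t)
        intro k hk
        exact factor_le hα0 hα1 k (le_trans (Nat.succ_le_succ (Nat.zero_le j)) (Finset.mem_Ioc.mp hk).1)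
    _ = (∏ k ∈ Finset.Ioc j t, ((k : ℝ) / ((k : ℝ) + 1))) ^ α := by
        apply Real.finset_prod_rpow
        intro k _; positivity
    _ = (((j:ℝ) + 1) / ((t:ℝ) + 1)) ^ α := by rw [tele_prod j t hjt]

lemma key_step {α : ℝ} (hα0 : 0 < α) (hα1 : α < 1) (n : ℕ) (hn : 1 ≤ n) :
    ((n:ℝ) + 1) ^ (α - 2) ≤ (1 - α)⁻¹ * ((n:ℝ) ^ (α - 1) - ((n:ℝ) + 1) ^ (α - 1)) := by
  have hx : (1:ℝ) ≤ (n:ℝ) := by exact_mod_cast hn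
  set x := (n:ℝ) with hxdef
  have hx0 : (0:ℝ) < x := by linarith
  have hx1 : (0:ℝ) < x + 1 := by linarith
  have hβ : (0:ℝ) < 1 - α := by linarith
  have hs : (-1:ℝ) ≤ -(1/(x+1)) := by
    have h1 : 1/(x+1) ≤ 1 := by rw [div_le_one hx1]; linarith
    linarith
  have hber := rpow_one_add_le_one_add_mul_self hs hβ.le (by linarith : 1 - α ≤ 1)
  have heq : (1:ℝ) + -(1/(x+1)) = x/(x+1) := by field_simp; ring
  rw [heq, Real.div_rpow hx0.le hx1.le] at hber
  set a := x ^ (1-α) with ha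
  set b := (x+1) ^ (1-α) with hb
  have hapos : 0 < a := Real.rpow_pos_of_pos hx0 _
  have hbpos : 0 < b := Real.rpow_pos_of_pos hx1 _
  have hab : a ≤ b := Real.rpow_le_rpow hx0.le (by linarith) hβ.le
  -- clear denominators in hber
  have h2 : a * (x+1) ≤ b * (x+1) - (1-α) * b := by
    rw [div_le_iff₀ hbpos] at hber
    have h3 := mul_le_mul_of_nonneg_right hber hx1.le
    have h5 : (1 + (1 - α) * -(1/(x+1))) * b * (x+1) = b*(x+1) - (1-α)*b := by
      field_simp
      ring
    linarith [h3, h5.le, h5.ge]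
  have e1 : x ^ (α - 1) = a⁻¹ := by
    rw [ha, ← Real.rpow_neg hx0.le]; norm_num
  have e2 : (x+1) ^ (α-1) = b⁻¹ := by
    rw [hb, ← Real.rpow_neg hx1.le]; norm_num
  have e3 : (x+1) ^ (α-2) = b⁻¹ * (x+1)⁻¹ := by
    rw [show (α-2) = (-(1-α)) + (-1) by ring, Real.rpow_add hx1, Real.rpow_neg_one,
      Real.rpow_neg hx1.le]
  rw [e1, e2, e3, ← sub_nonneg]
  have expand : (1-α)⁻¹ * (a⁻¹ - b⁻¹) - b⁻¹ * (x+1)⁻¹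
      = ((b * (x+1) - a * (x+1)) - (1-α) * a) / ((1-α) * a * b * (x+1)) := by
    field_simp
  rw [expand]
  apply div_nonneg
  · nlinarith [h2, hab, hβ]
  · positivity

lemma sum_rpow_le {α : ℝ} (hα0 : 0 < α) (hα1 : α < 1) (t : ℕ) (ht : 1 ≤ t) :
    ∑ i ∈ Finset.Icc 1 t, ((i:ℝ)) ^ (α - 2) ≤ 2 / (1 - α) := by
  have hβ : (0:ℝ) < 1 - α := by linarith
  have main : ∀ t : ℕ, 1 ≤ t →
      ∑ i ∈ Finset.Icc 1 t, ((i:ℝ)) ^ (α - 2) ≤ 1 + (1-α)⁻¹ * (1 - (t:ℝ) ^ (α - 1)) := by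
    intro t ht
    induction t, ht using Nat.le_induction with
    | base => norm_num
    | succ n hn ih =>
      rw [Finset.sum_Icc_succ_top (by omega : 1 ≤ n + 1)]
      have hk := key_step hα0 hα1 n hn
      push_cast
      push_cast at ih hk
      nlinarith [ih, hk]
  have h1 : (0:ℝ) ≤ (t:ℝ) ^ (α - 1) := Real.rpow_nonneg (by positivity) _
  have h2 : (1:ℝ) ≤ (1-α)⁻¹ := by
    rw [le_inv_comm₀ (by norm_num) hβ]; linarith
  calc ∑ i ∈ Finset.Icc 1 t, ((i:ℝ)) ^ (α - 2)
      ≤ 1 + (1-α)⁻¹ * (1 - (t:ℝ) ^ (α - 1)) := main t ht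
    _ ≤ (1-α)⁻¹ + (1-α)⁻¹ * 1 := by
        have : (1-α)⁻¹ * (1 - (t:ℝ) ^ (α - 1)) ≤ (1-α)⁻¹ * 1 := by
          apply mul_le_mul_of_nonneg_left _ (by positivity)
          linarith
        linarith
    _ = 2 / (1 - α) := by field_simp; ring

lemma shift_sum (φ : ℕ → ℝ) (hφ : ∀ m : ℕ, 1 ≤ m → 0 ≤ φ m) (i t : ℕ) :
    ∑ j ∈ Finset.Ioc i t, φ (j - i) ≤ ∑ m ∈ Finset.Icc 1 t, φ m := by
  rw [← Finset.sum_image (f := φ) (g := fun j => j - i) (s := Finset.Ioc i t)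
    (by intro x hx y hy hxy; simp only [Finset.coe_Ioc, Finset.mem_coe, Finset.mem_Ioc, Set.mem_Ioc] at hx hy; have hxy' : x - i = y - i := hxy; omega)]
  apply Finset.sum_le_sum_of_subset_of_nonneg
  · intro m hm
    simp only [Finset.mem_image, Finset.mem_Ioc, Finset.mem_Icc] at hm ⊢
    obtain ⟨j, ⟨hj1, hj2⟩, rfl⟩ := hm
    omega
  · intro m hm _
    exact hφ m (Finset.mem_Icc.mp hm).1

lemma coef_bound {α : ℝ} (hα0 : 0 < α) (hα1 : α < 1) (i j t : ℕ)
    (hi : 1 ≤ i) (hij : i < j) (hjt : j ≤ t) :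
    (1 / (i : ℝ)) * (1 / (j : ℝ)) *
      (∏ k ∈ Finset.Ioc i t, (1 - α / (k : ℝ))) *
      (∏ l ∈ Finset.Ioc j t, (1 - α / (l : ℝ))) ≤
    2 * (1 / ((t:ℝ)+1)) ^ α * (i:ℝ) ^ (α - 2) := by
  have hi1 : (1:ℝ) ≤ (i:ℝ) := by exact_mod_cast hi
  have hj1 : (1:ℝ) ≤ (j:ℝ) := by exact_mod_cast Nat.one_le_of_lt hij
  have hijR : (i:ℝ) ≤ (j:ℝ) := by exact_mod_cast hij.le
  have hi0 : (0:ℝ) < i := by linarith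
  have hj0 : (0:ℝ) < j := by linarith
  have ht0 : (0:ℝ) < (t:ℝ) + 1 := by positivity
  have hP1nn : 0 ≤ ∏ k ∈ Finset.Ioc i t, (1 - α / (k : ℝ)) :=
    Finset.prod_nonneg (prod_nonneg' hα1.le i t)
  have hP2nn : 0 ≤ ∏ l ∈ Finset.Ioc j t, (1 - α / (l : ℝ)) :=
    Finset.prod_nonneg (prod_nonneg' hα1.le j t)
  have hP1 : ∏ k ∈ Finset.Ioc i t, (1 - α / (k : ℝ)) ≤ 1 := prod_le_one' hα0.le hα1.le i t
  have hP2 : ∏ l ∈ Finset.Ioc j t, (1 - α / (l : ℝ)) ≤ (((j:ℝ)+1)/((t:ℝ)+1)) ^ α :=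
    prod_le_pow hα0.le hα1.le j t hjt
  have step1 : (1 / (i : ℝ)) * (1 / (j : ℝ)) *
      (∏ k ∈ Finset.Ioc i t, (1 - α / (k : ℝ))) *
      (∏ l ∈ Finset.Ioc j t, (1 - α / (l : ℝ))) ≤
      (1 / (i : ℝ)) * (1 / (j : ℝ)) * (((j:ℝ)+1)/((t:ℝ)+1)) ^ α := by
    calc (1 / (i : ℝ)) * (1 / (j : ℝ)) *
        (∏ k ∈ Finset.Ioc i t, (1 - α / (k : ℝ))) *
        (∏ l ∈ Finset.Ioc j t, (1 - α / (l : ℝ)))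
        ≤ (1 / (i : ℝ)) * (1 / (j : ℝ)) * 1 * (((j:ℝ)+1)/((t:ℝ)+1)) ^ α := by
          apply mul_le_mul (mul_le_mul_of_nonneg_left hP1 (by positivity)) hP2 hP2nn (by positivity)
      _ = (1 / (i : ℝ)) * (1 / (j : ℝ)) * (((j:ℝ)+1)/((t:ℝ)+1)) ^ α := by ring
  refine step1.trans ?_
  have hsplit : (((j:ℝ)+1)/((t:ℝ)+1)) ^ α = ((j:ℝ)+1) ^ α * (1/((t:ℝ)+1)) ^ α := by
    rw [← Real.mul_rpow (by positivity) (by positivity)]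
    congr 1
    field_simp
  rw [hsplit]
  have hT : (0:ℝ) ≤ (1/((t:ℝ)+1)) ^ α := by positivity
  have core : (1 / (i : ℝ)) * (1 / (j : ℝ)) * ((j:ℝ)+1) ^ α ≤ 2 * (i:ℝ) ^ (α - 2) := by
    have h2j : ((j:ℝ)+1) ^ α ≤ 2 * (j:ℝ) ^ α := by
      calc ((j:ℝ)+1) ^ α ≤ (2 * (j:ℝ)) ^ α :=
            Real.rpow_le_rpow (by positivity) (by linarith) hα0.le
        _ = 2 ^ α * (j:ℝ) ^ α := Real.mul_rpow (by norm_num) (by positivity)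
        _ ≤ 2 * (j:ℝ) ^ α := by
            apply mul_le_mul_of_nonneg_right _ (by positivity)
            calc (2:ℝ) ^ α ≤ (2:ℝ) ^ (1:ℝ) :=
                  Real.rpow_le_rpow_of_exponent_le (by norm_num) hα1.le
              _ = 2 := Real.rpow_one 2
    have e4 : (1 / (j : ℝ)) * (j:ℝ) ^ α = (j:ℝ) ^ (α - 1) := by
      rw [show α - 1 = α + (-1) by ring, Real.rpow_add hj0, Real.rpow_neg_one]
      ring
    have e5 : (1 / (i : ℝ)) * (i:ℝ) ^ (α - 1) = (i:ℝ) ^ (α - 2) := by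
      rw [show α - 2 = (α - 1) + (-1) by ring, Real.rpow_add hi0, Real.rpow_neg_one]
      ring
    have hmono : (j:ℝ) ^ (α - 1) ≤ (i:ℝ) ^ (α - 1) :=
      Real.rpow_le_rpow_of_nonpos hi0 hijR (by linarith)
    calc (1 / (i : ℝ)) * (1 / (j : ℝ)) * ((j:ℝ)+1) ^ α
        ≤ (1 / (i : ℝ)) * (1 / (j : ℝ)) * (2 * (j:ℝ) ^ α) :=
          mul_le_mul_of_nonneg_left h2j (by positivity)
      _ = 2 * ((1 / (i : ℝ)) * ((1 / (j : ℝ)) * (j:ℝ) ^ α)) := by ring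
      _ = 2 * ((1 / (i : ℝ)) * (j:ℝ) ^ (α - 1)) := by rw [e4]
      _ ≤ 2 * ((1 / (i : ℝ)) * (i:ℝ) ^ (α - 1)) := by
          apply mul_le_mul_of_nonneg_left _ (by norm_num)
          exact mul_le_mul_of_nonneg_left hmono (by positivity)
      _ = 2 * (i:ℝ) ^ (α - 2) := by rw [e5]
  calc (1 / (i : ℝ)) * (1 / (j : ℝ)) * (((j:ℝ)+1) ^ α * (1/((t:ℝ)+1)) ^ α)
      = ((1 / (i : ℝ)) * (1 / (j : ℝ)) * ((j:ℝ)+1) ^ α) * (1/((t:ℝ)+1)) ^ α := by ring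
    _ ≤ (2 * (i:ℝ) ^ (α - 2)) * (1/((t:ℝ)+1)) ^ α := mul_le_mul_of_nonneg_right core hT
    _ = 2 * (1 / ((t:ℝ)+1)) ^ α * (i:ℝ) ^ (α - 2) := by ring
theorem pair_sum_mixing_bound_theta_one
    (α : ℝ) (hα : α ∈ Set.Ioo (0 : ℝ) 1)
    (φ : ℕ → ℝ) (hφ : ∀ m : ℕ, 1 ≤ m → 0 ≤ φ m)
    (t : ℕ) (ht : 1 ≤ t) :
    ∑ i ∈ Finset.Icc 1 t, ∑ j ∈ Finset.Ioc i t,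
        (1 / (i : ℝ)) * (1 / (j : ℝ)) *
          (∏ k ∈ Finset.Ioc i t, (1 - α / (k : ℝ))) *
          (∏ l ∈ Finset.Ioc j t, (1 - α / (l : ℝ))) * φ (j - i) ≤
      6 / (1 - α) * (1 / ((t : ℝ) + 1)) ^ α * ∑ i ∈ Finset.Icc 1 t, φ i := by
  obtain ⟨hα0, hα1⟩ := hα
  have hβ : (0:ℝ) < 1 - α := by linarith
  have hT : (0:ℝ) ≤ (1/((t:ℝ)+1)) ^ α := by positivity
  have hΦ0 : 0 ≤ ∑ i ∈ Finset.Icc 1 t, φ i :=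
    Finset.sum_nonneg fun i hi => hφ i (Finset.mem_Icc.mp hi).1
  calc ∑ i ∈ Finset.Icc 1 t, ∑ j ∈ Finset.Ioc i t,
        (1 / (i : ℝ)) * (1 / (j : ℝ)) *
          (∏ k ∈ Finset.Ioc i t, (1 - α / (k : ℝ))) *
          (∏ l ∈ Finset.Ioc j t, (1 - α / (l : ℝ))) * φ (j - i)
      ≤ ∑ i ∈ Finset.Icc 1 t, ∑ j ∈ Finset.Ioc i t,
          2 * (1/((t:ℝ)+1)) ^ α * (i:ℝ) ^ (α-2) * φ (j-i) := by
        apply Finset.sum_le_sum; intro i hi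
        apply Finset.sum_le_sum; intro j hj
        obtain ⟨hi1, hit⟩ := Finset.mem_Icc.mp hi
        obtain ⟨hij, hjt⟩ := Finset.mem_Ioc.mp hj
        have hφn : 0 ≤ φ (j-i) := hφ _ (by omega)
        exact mul_le_mul_of_nonneg_right (coef_bound hα0 hα1 i j t hi1 hij hjt) hφn
    _ = ∑ i ∈ Finset.Icc 1 t,
          2 * (1/((t:ℝ)+1)) ^ α * ((i:ℝ) ^ (α-2) * ∑ j ∈ Finset.Ioc i t, φ (j-i)) := by
        apply Finset.sum_congr rfl; intro i _
        rw [Finset.mul_sum, Finset.mul_sum]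
        apply Finset.sum_congr rfl; intro j _; ring
    _ ≤ ∑ i ∈ Finset.Icc 1 t,
          2 * (1/((t:ℝ)+1)) ^ α * ((i:ℝ) ^ (α-2) * ∑ m ∈ Finset.Icc 1 t, φ m) := by
        apply Finset.sum_le_sum; intro i hi
        apply mul_le_mul_of_nonneg_left _ (by positivity)
        apply mul_le_mul_of_nonneg_left (shift_sum φ hφ i t) (by positivity)
    _ = 2 * (1/((t:ℝ)+1)) ^ α * (∑ m ∈ Finset.Icc 1 t, φ m) *
          ∑ i ∈ Finset.Icc 1 t, (i:ℝ) ^ (α-2) := by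
        rw [Finset.mul_sum]; apply Finset.sum_congr rfl; intro i _; ring
    _ ≤ 2 * (1/((t:ℝ)+1)) ^ α * (∑ m ∈ Finset.Icc 1 t, φ m) * (2/(1-α)) := by
        exact mul_le_mul_of_nonneg_left (sum_rpow_le hα0 hα1 t ht)
          (mul_nonneg (mul_nonneg (by norm_num) hT) hΦ0)
    _ ≤ 6 / (1 - α) * (1 / ((t : ℝ) + 1)) ^ α * ∑ i ∈ Finset.Icc 1 t, φ i := by
        have h1 : 0 ≤ (1/((t:ℝ)+1)) ^ α * ∑ i ∈ Finset.Icc 1 t, φ i := mul_nonneg hT hΦ0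
        have h2 : (4:ℝ)/(1-α) ≤ 6/(1-α) :=
          (div_le_div_iff_of_pos_right hβ).mpr (by norm_num)
        calc 2 * (1/((t:ℝ)+1)) ^ α * (∑ m ∈ Finset.Icc 1 t, φ m) * (2/(1-α))
            = 4/(1-α) * ((1/((t:ℝ)+1)) ^ α * ∑ m ∈ Finset.Icc 1 t, φ m) := by ring
          _ ≤ 6/(1-α) * ((1/((t:ℝ)+1)) ^ α * ∑ m ∈ Finset.Icc 1 t, φ m) :=
              mul_le_mul_of_nonneg_right h2 h1
          _ = 6 / (1 - α) * (1 / ((t : ℝ) + 1)) ^ α * ∑ i ∈ Finset.Icc 1 t, φ i := by ring
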